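/- For the real line L = {(t, 1+t) : t ∈ C \ {0,−1}} ⊂ (C*)^2, the amoeba Log(L) ⊂ R^2 has Lebesgue measure equal to π^2/2. -/

import Mathlib

open MeasureTheory Real Set
open scoped ENNReal


lemma oddsum : HasSum (fun k : ℕ => 4 / ((2*(k:ℝ)+1))^2) (Real.pi^2/2) := by
  have hz : HasSum (fun n : ℕ => (1:ℝ) / (n:ℝ)^2) (Real.pi^2/6) := hasSum_zeta_two
  have he : HasSum (fun k : ℕ => (1:ℝ) / ((2*k:ℕ):ℝ)^2) (Real.pi^2/6/4) := by
    have h4 := hz.div_const 4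
    have heq : (fun k : ℕ => (1:ℝ) / ((2*k:ℕ):ℝ)^2) = fun k : ℕ => (1:ℝ)/(k:ℝ)^2/4 := by
      funext k
      rcases Nat.eq_zero_or_pos k with h | h
      · simp [h]
      · have : (k:ℝ) ≠ 0 := Nat.cast_ne_zero.mpr h.ne'
        push_cast
        field_simp
        ring
    rw [heq]; exact h4
  have ho : Summable (fun k : ℕ => (1:ℝ) / ((2*k+1:ℕ):ℝ)^2) :=
    hz.summable.comp_injective (fun a b hab => by omega)
  have hb := ho.hasSum
  have hcomb := HasSum.even_add_odd (f := fun n : ℕ => (1:ℝ)/(n:ℝ)^2) he hb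
  have huniq : Real.pi^2/6 = Real.pi^2/6/4 + ∑' k, (1:ℝ) / ((2*k+1:ℕ):ℝ)^2 :=
    hz.unique hcomb
  have hodd : HasSum (fun k : ℕ => (1:ℝ) / ((2*k+1:ℕ):ℝ)^2) (Real.pi^2/8) := by
    have h8 : (∑' k, (1:ℝ) / ((2*k+1:ℕ):ℝ)^2) = Real.pi^2/8 := by linarith
    rwa [h8] at hb
  have h4 := hodd.mul_left 4
  have heq2 : (fun k : ℕ => 4 * ((1:ℝ) / ((2*k+1:ℕ):ℝ)^2)) = fun k : ℕ => 4/((2*(k:ℝ)+1))^2 := by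
    funext k; push_cast; ring
  have hv : 4 * (Real.pi^2/8) = Real.pi^2/2 := by ring
  rw [heq2, hv] at h4
  exact h4

lemma integrable_exp_neg_abs {a : ℝ} (ha : 0 < a) :
    Integrable (fun x : ℝ => Real.exp (-(a*|x|))) := by
  have hIoi : IntegrableOn (fun x : ℝ => Real.exp (-(a*|x|))) (Ioi 0) := by
    have h0 : IntegrableOn (fun x : ℝ => Real.exp (-a*x)) (Ioi 0) := exp_neg_integrableOn_Ioi 0 ha
    refine h0.congr_fun (fun x hx => ?_) measurableSet_Ioi
    rw [abs_of_pos hx]; ring_nf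
  have hIic : IntegrableOn (fun x : ℝ => Real.exp (-(a*|x|))) (Iic 0) := by
    rw [← Measure.map_neg_eq_self (volume : Measure ℝ)]
    have m : MeasurableEmbedding fun x : ℝ => -x := (Homeomorph.neg ℝ).measurableEmbedding
    rw [m.integrableOn_map_iff]
    simp_rw [Function.comp_def, abs_neg, neg_preimage, neg_Iic, neg_zero]
    exact Iff.mpr integrableOn_Ici_iff_integrableOn_Ioi hIoi
  have h := hIic.union hIoi
  rwa [Iic_union_Ioi, integrableOn_univ] at h

lemma int_exp_abs {a : ℝ} (ha : 0 < a) : ∫ x : ℝ, Real.exp (-(a*|x|)) = 2/a := by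
  have h1 : ∫ x : ℝ, Real.exp (-(a*|x|)) = 2 * ∫ x in Ioi (0:ℝ), Real.exp (-(a*x)) :=
    integral_comp_abs (f := fun y => Real.exp (-(a*y)))
  have h2 := integral_comp_mul_left_Ioi (fun y => Real.exp (-y)) 0 ha
  simp only [mul_zero, smul_eq_mul, integral_exp_neg_Ioi_zero] at h2
  rw [h1, h2, mul_one]
  field_simp


lemma series_eq {x : ℝ} (hx : x ≠ 0) :
    HasSum (fun k : ℕ => 2 * (1/(2*(k:ℝ)+1)) * Real.exp (-((2*(k:ℝ)+1)*|x|)))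
      (Real.log (1 + Real.exp x) - Real.log |Real.exp x - 1|) := by
  set u : ℝ := Real.exp (-|x|) with hu_def
  have hu0 : 0 < u := Real.exp_pos _
  have hu1 : u < 1 := by
    rw [hu_def, Real.exp_lt_one_iff]
    simpa using abs_pos.mpr hx
  have habs : |u| < 1 := by rwa [abs_of_pos hu0]
  have hS := hasSum_log_sub_log_of_abs_lt_one habs
  have hterm : (fun k : ℕ => (2:ℝ) * (1 / (2 * (k:ℝ) + 1)) * u ^ (2 * k + 1))
      = fun k : ℕ => 2 * (1/(2*(k:ℝ)+1)) * Real.exp (-((2*(k:ℝ)+1)*|x|)) := by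
    funext k
    congr 1
    rw [hu_def, ← Real.exp_nat_mul]
    congr 1
    push_cast
    ring
  have hval : Real.log (1 + u) - Real.log (1 - u)
      = Real.log (1 + Real.exp x) - Real.log |Real.exp x - 1| := by
    rcases lt_or_gt_of_ne hx with h | h
    · have hax : |x| = -x := abs_of_neg h
      have hux : u = Real.exp x := by rw [hu_def, hax, neg_neg]
      have hlt : Real.exp x < 1 := by rw [Real.exp_lt_one_iff]; exact h
      rw [hux, abs_of_neg (by linarith : Real.exp x - 1 < 0),
        show -(Real.exp x - 1) = 1 - Real.exp x by ring]
    · have hax : |x| = x := abs_of_pos h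
      have hgt : 1 < Real.exp x := by
        rw [show (1:ℝ) = Real.exp 0 by simp]
        exact Real.exp_lt_exp.mpr h
      have hexp : Real.exp x * u = 1 := by
        rw [hu_def, hax, ← Real.exp_add]
        simp
      have e1 : 1 + Real.exp x = Real.exp x * (1 + u) := by linear_combination -hexp
      have e2 : Real.exp x - 1 = Real.exp x * (1 - u) := by linear_combination hexp
      rw [abs_of_pos (by linarith : (0:ℝ) < Real.exp x - 1), e1, e2,
        Real.log_mul (Real.exp_ne_zero x) (by linarith : (1:ℝ) + u ≠ 0),
        Real.log_mul (Real.exp_ne_zero x) (by linarith : (1:ℝ) - u ≠ 0)]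
      ring
  rw [hterm, hval] at hS
  exact hS

lemma lint_eq : ∫⁻ x : ℝ, ENNReal.ofReal
      (Real.log (1 + Real.exp x) - Real.log |Real.exp x - 1|)
    = ENNReal.ofReal (Real.pi^2/2) := by
  set G : ℕ → ℝ → ℝ≥0∞ :=
    fun k x => ENNReal.ofReal (2 * (1/(2*(k:ℝ)+1)) * Real.exp (-((2*(k:ℝ)+1)*|x|))) with hG
  have hae : ∀ᵐ x : ℝ, ENNReal.ofReal
      (Real.log (1 + Real.exp x) - Real.log |Real.exp x - 1|) = ∑' k, G k x := by
    have h0 : ∀ᵐ x : ℝ, x ≠ 0 := by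
      rw [ae_iff]
      simpa using Real.volume_singleton (a := 0)
    filter_upwards [h0] with x hx
    have hS := series_eq hx
    have hnn : ∀ k : ℕ, 0 ≤ 2 * (1/(2*(k:ℝ)+1)) * Real.exp (-((2*(k:ℝ)+1)*|x|)) := by
      intro k; positivity
    rw [← hS.tsum_eq, ENNReal.ofReal_tsum_of_nonneg hnn hS.summable]
  rw [lintegral_congr_ae hae]
  have hmeas : ∀ k : ℕ, AEMeasurable (G k) volume := by
    intro k
    apply Measurable.aemeasurable
    apply ENNReal.measurable_ofReal.comp
    exact (measurable_const.mul ((measurable_const.mul measurable_abs).neg.exp))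
  rw [lintegral_tsum hmeas]
  have hint : ∀ k : ℕ, ∫⁻ x : ℝ, G k x = ENNReal.ofReal (4/((2*(k:ℝ)+1))^2) := by
    intro k
    have ha : (0:ℝ) < 2*(k:ℝ)+1 := by positivity
    have hI : Integrable (fun x : ℝ => 2 * (1/(2*(k:ℝ)+1)) * Real.exp (-((2*(k:ℝ)+1)*|x|))) :=
      (integrable_exp_neg_abs ha).const_mul _
    rw [hG]
    rw [← ofReal_integral_eq_lintegral_ofReal hI
      (Filter.Eventually.of_forall fun x => by positivity)]
    rw [integral_const_mul, int_exp_abs ha]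
    congr 1
    field_simp
    ring
  simp_rw [hint]
  rw [← ENNReal.ofReal_tsum_of_nonneg (fun k => by positivity) oddsum.summable, oddsum.tsum_eq]

lemma set_eq : {p : ℝ × ℝ | ∃ t : ℂ, t ≠ 0 ∧ t ≠ -1 ∧
        p.1 = Real.log ‖t‖ ∧ p.2 = Real.log ‖1 + t‖}
    = {p : ℝ × ℝ | Real.exp p.2 ≤ 1 + Real.exp p.1 ∧ Real.exp p.1 ≤ 1 + Real.exp p.2 ∧
        1 ≤ Real.exp p.1 + Real.exp p.2} := by
  ext ⟨x, y⟩
  simp only [Set.mem_setOf_eq]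
  constructor
  · rintro ⟨t, ht0, ht1, hx, hy⟩
    have h0 : (0:ℝ) < ‖t‖ := norm_pos_iff.mpr ht0
    have h1 : (0:ℝ) < ‖1 + t‖ := by
      rw [norm_pos_iff]
      intro h
      exact ht1 (by linear_combination h)
    subst hx hy
    rw [Real.exp_log h0, Real.exp_log h1]
    refine ⟨?_, ?_, ?_⟩
    · calc ‖1 + t‖ ≤ ‖(1:ℂ)‖ + ‖t‖ := norm_add_le _ _
        _ = 1 + ‖t‖ := by rw [norm_one]
    · calc ‖t‖ = ‖(1 + t) - 1‖ := by ring_nf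
        _ ≤ ‖1 + t‖ + ‖(1:ℂ)‖ := norm_sub_le _ _
        _ = 1 + ‖1 + t‖ := by rw [norm_one]; ring
    · calc (1:ℝ) = ‖(1 + t) - t‖ := by norm_num
        _ ≤ ‖1 + t‖ + ‖t‖ := norm_sub_le _ _
        _ = ‖t‖ + ‖1 + t‖ := add_comm _ _
  · rintro ⟨h1, h2, h3⟩
    set r := Real.exp x with hr_def
    set s := Real.exp y with hs_def
    have hr : 0 < r := Real.exp_pos x
    have hs : 0 < s := Real.exp_pos y
    set c : ℝ := (s^2 - 1 - r^2)/(2*r) with hc_def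
    have hc1 : c ≤ 1 := by
      rw [hc_def, div_le_one (by positivity)]
      nlinarith [hs.le, hr.le]
    have hc2 : -1 ≤ c := by
      rw [hc_def, le_div_iff₀ (by positivity)]
      nlinarith [mul_nonneg (by linarith : (0:ℝ) ≤ s - (r - 1)) (by linarith : (0:ℝ) ≤ s + (r - 1))]
    have hcsq : 1 - c^2 ≥ 0 := by nlinarith
    have hsq : Real.sqrt (1 - c^2) ^ 2 = 1 - c^2 := Real.sq_sqrt hcsq
    set b := r*Real.sqrt (1 - c^2) with hb_def
    have hnt : ‖(↑(r*c) : ℂ) + (↑b : ℂ) * Complex.I‖ = r := by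
      rw [Complex.norm_add_mul_I]
      rw [show (r*c)^2 + b^2 = r^2 by rw [hb_def]; nlinarith [hsq]]
      exact Real.sqrt_sq hr.le
    have hnt1 : ‖1 + ((↑(r*c) : ℂ) + (↑b : ℂ) * Complex.I)‖ = s := by
      have h9 : (1 : ℂ) + ((↑(r*c) : ℂ) + (↑b : ℂ) * Complex.I)
          = (↑(1 + r*c) : ℂ) + (↑b : ℂ) * Complex.I := by push_cast; ring
      rw [h9, Complex.norm_add_mul_I]
      rw [show (1 + r*c)^2 + b^2 = s^2 by
        rw [hb_def]
        have h2rc : 2*r*c = s^2 - 1 - r^2 := by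
          rw [hc_def]; field_simp
        nlinarith [hsq]]
      exact Real.sqrt_sq hs.le
    refine ⟨(↑(r*c) : ℂ) + (↑b : ℂ) * Complex.I, ?_, ?_, ?_, ?_⟩
    · intro h
      rw [h] at hnt
      simp only [norm_zero] at hnt
      exact hr.ne hnt
    · intro h
      rw [h] at hnt1
      simp only [neg_add_cancel, add_neg_cancel, norm_zero] at hnt1
      exact hs.ne hnt1
    · rw [hnt, hr_def, Real.log_exp]
    · rw [hnt1, hs_def, Real.log_exp]

noncomputable def lowF : ℝ → ℝ := fun x => Real.log |Real.exp x - 1|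
noncomputable def upF : ℝ → ℝ := fun x => Real.log (1 + Real.exp x)

lemma lowF_meas : Measurable lowF :=
  Real.measurable_log.comp ((Real.measurable_exp.sub measurable_const).abs)
lemma upF_meas : Measurable upF :=
  Real.measurable_log.comp (measurable_const.add Real.measurable_exp)

lemma graph_null {f : ℝ → ℝ} (hf : Measurable f) : volume {p : ℝ × ℝ | p.2 = f p.1} = 0 := by
  rw [Measure.volume_eq_prod, Measure.prod_apply (measurableSet_graph hf)]
  have : ∀ x : ℝ, (Prod.mk x ⁻¹' {p : ℝ × ℝ | p.2 = f p.1}) = {f x} := by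
    intro x; ext y; simp [Set.mem_setOf_eq]
  simp_rw [this, Real.volume_singleton, lintegral_zero]

lemma line_null : volume {p : ℝ × ℝ | p.1 = 0} = 0 := by
  have : {p : ℝ × ℝ | p.1 = 0} = ({0} : Set ℝ) ×ˢ (univ : Set ℝ) := by
    ext p; simp only [Set.mem_setOf_eq, Set.mem_prod, Set.mem_singleton_iff, Set.mem_univ,
      and_true]
  rw [this, Measure.volume_eq_prod, Measure.prod_prod, Real.volume_singleton, zero_mul]

lemma region_sub :
    regionBetween lowF upF univ ⊆ {p : ℝ × ℝ | Real.exp p.2 ≤ 1 + Real.exp p.1 ∧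
      Real.exp p.1 ≤ 1 + Real.exp p.2 ∧ 1 ≤ Real.exp p.1 + Real.exp p.2} := by
  rintro ⟨x, y⟩ ⟨-, hl, hu⟩
  simp only [Set.mem_setOf_eq] at *
  have hup : Real.exp y < 1 + Real.exp x := by
    have := Real.exp_lt_exp.mpr hu
    rwa [upF, Real.exp_log (by positivity)] at this
  have hlow : |Real.exp x - 1| < Real.exp y := by
    rcases eq_or_ne x 0 with h | h
    · simp [h, Real.exp_pos y, (Real.exp_pos y).le, abs_of_nonneg, le_of_lt]
    · have habs : (0:ℝ) < |Real.exp x - 1| := by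
        rw [abs_pos, sub_ne_zero]
        intro hc
        apply h
        have : Real.exp x = Real.exp 0 := by rw [Real.exp_zero]; linarith [hc]
        exact Real.exp_injective this
      have := Real.exp_lt_exp.mpr hl
      rwa [lowF, Real.exp_log habs] at this
  have h1 := abs_lt.mp hlow
  exact ⟨hup.le, by linarith [h1.1, h1.2], by linarith [h1.1, h1.2]⟩

lemma sub_region :
    {p : ℝ × ℝ | Real.exp p.2 ≤ 1 + Real.exp p.1 ∧
      Real.exp p.1 ≤ 1 + Real.exp p.2 ∧ 1 ≤ Real.exp p.1 + Real.exp p.2} ⊆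
    {p : ℝ × ℝ | p.1 ∈ (univ : Set ℝ) ∧ p.2 ∈ Icc (lowF p.1) (upF p.1)} ∪
      {p : ℝ × ℝ | p.1 = 0} := by
  rintro ⟨x, y⟩ ⟨h1, h2, h3⟩
  rcases eq_or_ne x 0 with h | h
  · right; exact h
  · left
    refine ⟨trivial, ?_, ?_⟩
    · have habs : (0:ℝ) < |Real.exp x - 1| := by
        rw [abs_pos, sub_ne_zero]
        intro hc
        apply h
        apply Real.exp_injective
        rw [Real.exp_zero]; linarith [hc]
      have hle : |Real.exp x - 1| ≤ Real.exp y := abs_le.mpr ⟨by linarith, by linarith⟩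
      have := Real.log_le_log habs hle
      rwa [Real.log_exp] at this
    · have hle : Real.exp y ≤ 1 + Real.exp x := h1
      have := Real.log_le_log (Real.exp_pos y) hle
      rwa [Real.log_exp] at this

theorem vol_region : volume {p : ℝ × ℝ | Real.exp p.2 ≤ 1 + Real.exp p.1 ∧
      Real.exp p.1 ≤ 1 + Real.exp p.2 ∧ 1 ≤ Real.exp p.1 + Real.exp p.2}
    = ∫⁻ x : ℝ, ENNReal.ofReal (upF x - lowF x) := by
  have hIcc : {p : ℝ × ℝ | p.1 ∈ (univ : Set ℝ) ∧ p.2 ∈ Icc (lowF p.1) (upF p.1)} ⊆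
      regionBetween lowF upF univ ∪ ({p : ℝ × ℝ | p.2 = lowF p.1} ∪ {p : ℝ × ℝ | p.2 = upF p.1}) := by
    rintro ⟨x, y⟩ ⟨-, hy1, hy2⟩
    rcases eq_or_lt_of_le hy1 with h | h
    · exact Or.inr (Or.inl h.symm)
    rcases eq_or_lt_of_le hy2 with h' | h'
    · exact Or.inr (Or.inr h')
    exact Or.inl ⟨trivial, h, h'⟩
  have hvol : volume (regionBetween lowF upF univ) = ∫⁻ x : ℝ, ENNReal.ofReal (upF x - lowF x) := by
    rw [Measure.volume_eq_prod, volume_regionBetween_eq_lintegral' lowF_meas upF_meas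
      MeasurableSet.univ]
    rw [setLIntegral_univ]
    rfl
  refine le_antisymm ?_ ?_
  · calc volume {p : ℝ × ℝ | Real.exp p.2 ≤ 1 + Real.exp p.1 ∧
          Real.exp p.1 ≤ 1 + Real.exp p.2 ∧ 1 ≤ Real.exp p.1 + Real.exp p.2}
        ≤ volume ({p : ℝ × ℝ | p.1 ∈ (univ : Set ℝ) ∧ p.2 ∈ Icc (lowF p.1) (upF p.1)} ∪
            {p : ℝ × ℝ | p.1 = 0}) := measure_mono sub_region
      _ ≤ volume {p : ℝ × ℝ | p.1 ∈ (univ : Set ℝ) ∧ p.2 ∈ Icc (lowF p.1) (upF p.1)} +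
            volume {p : ℝ × ℝ | p.1 = 0} := measure_union_le _ _
      _ = volume {p : ℝ × ℝ | p.1 ∈ (univ : Set ℝ) ∧ p.2 ∈ Icc (lowF p.1) (upF p.1)} := by
            rw [line_null, add_zero]
      _ ≤ volume (regionBetween lowF upF univ ∪
            ({p : ℝ × ℝ | p.2 = lowF p.1} ∪ {p : ℝ × ℝ | p.2 = upF p.1})) := measure_mono hIcc
      _ ≤ volume (regionBetween lowF upF univ) +
            volume ({p : ℝ × ℝ | p.2 = lowF p.1} ∪ {p : ℝ × ℝ | p.2 = upF p.1}) :=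
          measure_union_le _ _
      _ ≤ volume (regionBetween lowF upF univ) +
            (volume {p : ℝ × ℝ | p.2 = lowF p.1} + volume {p : ℝ × ℝ | p.2 = upF p.1}) := by
          gcongr
          exact measure_union_le _ _
      _ = ∫⁻ x : ℝ, ENNReal.ofReal (upF x - lowF x) := by
          rw [graph_null lowF_meas, graph_null upF_meas, add_zero, add_zero, hvol]
  · rw [← hvol]
    exact measure_mono region_sub


theorem amoeba_of_line_volume :
    volume {p : ℝ × ℝ | ∃ t : ℂ, t ≠ 0 ∧ t ≠ -1 ∧
        p.1 = Real.log ‖t‖ ∧ p.2 = Real.log ‖1 + t‖} =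
      ENNReal.ofReal (Real.pi ^ 2 / 2) := by
  rw [set_eq, vol_region]
  have : ∀ x : ℝ, upF x - lowF x = Real.log (1 + Real.exp x) - Real.log |Real.exp x - 1| :=
    fun x => rfl
  simp_rw [this]
  exact lint_eq
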